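/- Let m ≥ 1 and n ≥ 2 be integers, and let U₁, …, Uₙ be independent identically distributed random variables taking values in the finite alphabet {1, …, m}, with distribution p_i = Pr[U₁ = i] and Shannon entropy H(p) = −Σ_{i=1}^m p_i·log₂ p_i. Let p̂_i = (1/n)·#{k : U_k = i} be the empirical frequencies and Ĥ_MLE = −Σ_{i=1}^m p̂_i·log₂ p̂_i the empirical (maximum-likelihood) entropy. Then for every real ε with 0 < ε ≤ 1, one has Pr[ H(p) ≤ Ĥ_MLE − √(2·(log₂ n)²·ln(2/ε)/n) ] ≤ ε. -/

import Mathlib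

open MeasureTheory ProbabilityTheory

section McdAux
open Real

lemma mcd_key (q : ℝ) (hq0 : 0 ≤ q) (hq1 : q ≤ 1) (h : ℝ) :
    1 - q + q * Real.exp h ≤ Real.exp (q * h + h ^ 2 / 8) := by
  set D : ℝ → ℝ := fun x => 1 - q + q * Real.exp x with hD
  have hDpos : ∀ x, 0 < D x := by
    intro x
    rcases lt_or_eq_of_le hq1 with h1 | h1
    · have : 0 ≤ q * Real.exp x := mul_nonneg hq0 (Real.exp_pos x).le
      simp only [hD]; linarith
    · subst h1; simp only [hD]; simpa using Real.exp_pos x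
  have hDderiv : ∀ x, HasDerivAt D (q * Real.exp x) x := by
    intro x
    exact (((Real.hasDerivAt_exp x).const_mul q).const_add (1 - q))
  set g : ℝ → ℝ := fun x => q * x + x ^ 2 / 8 - Real.log (D x) with hg
  set g' : ℝ → ℝ := fun x => q + x / 4 - q * Real.exp x / D x with hg'
  have hgderiv : ∀ x, HasDerivAt g (g' x) x := by
    intro x
    have h1 : HasDerivAt (fun x : ℝ => q * x + x ^ 2 / 8) (q + x * 2 / 8) x := by
      have := ((hasDerivAt_pow 2 x).div_const 8).const_add (0:ℝ)
      have h2 := (hasDerivAt_id x).const_mul q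
      exact (by simpa [pow_one, mul_comm] using h2.add ((hasDerivAt_pow 2 x).div_const 8) :
        HasDerivAt ((fun y => q * y) + fun x => x ^ 2 / 8) (q + x * 2 / 8) x)
    have h3 : HasDerivAt (fun x => Real.log (D x)) (q * Real.exp x / D x) x :=
      (hDderiv x).log (hDpos x).ne'
    have := h1.sub h3
    convert this using 1
    show q + x / 4 - q * Real.exp x / D x = _; ring
    all_goals rfl
  have hg'deriv : ∀ x, HasDerivAt g'
      (1 / 4 - (q * Real.exp x * D x - q * Real.exp x * (q * Real.exp x)) / (D x) ^ 2) x := by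
    intro x
    have h1 : HasDerivAt (fun x : ℝ => q + x / 4) (1 / 4) x := by
      simpa using ((hasDerivAt_id x).div_const 4).const_add q
    have h2 : HasDerivAt (fun x => q * Real.exp x / D x)
        ((q * Real.exp x * D x - q * Real.exp x * (q * Real.exp x)) / (D x) ^ 2) x :=
      ((Real.hasDerivAt_exp x).const_mul q).div (hDderiv x) (hDpos x).ne'
    exact h1.sub h2
  have hg'mono : Monotone g' := by
    apply monotone_of_deriv_nonneg (fun x => (hg'deriv x).differentiableAt)
    intro x
    rw [(hg'deriv x).deriv]
    rw [sub_nonneg, div_le_iff₀ (pow_pos (hDpos x) 2)]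
    have hb : 0 ≤ q * Real.exp x := mul_nonneg hq0 (Real.exp_pos x).le
    have ha : 0 ≤ 1 - q := by linarith
    have hDx : D x = 1 - q + q * Real.exp x := rfl
    nlinarith [sq_nonneg (1 - q - q * Real.exp x)]
  have hg'0 : g' 0 = 0 := by
    simp only [hg', hD]
    norm_num
  have hgdiff : Differentiable ℝ g := fun x => (hgderiv x).differentiableAt
  have hg0 : g 0 = 0 := by
    simp only [hg, hD]
    norm_num
  have hgnonneg : 0 ≤ g h := by
    rcases le_or_gt 0 h with hh | hh
    · have hmono : MonotoneOn g (Set.Ici 0) := by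
        apply monotoneOn_of_deriv_nonneg (convex_Ici 0) hgdiff.continuous.continuousOn
          hgdiff.differentiableOn
        intro x hx
        rw [(hgderiv x).deriv]
        rw [interior_Ici] at hx
        have := hg'mono (le_of_lt hx)
        rw [hg'0] at this
        exact this
      have := hmono (Set.self_mem_Ici) hh hh
      rwa [hg0] at this
    · have hanti : AntitoneOn g (Set.Iic 0) := by
        apply antitoneOn_of_deriv_nonpos (convex_Iic 0) hgdiff.continuous.continuousOn
          hgdiff.differentiableOn
        intro x hx
        rw [(hgderiv x).deriv]
        rw [interior_Iic] at hx
        have := hg'mono (le_of_lt hx)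
        rwa [hg'0] at this
      have := hanti hh.le (Set.self_mem_Iic) hh.le
      rwa [hg0] at this
  have hlog : Real.log (D h) ≤ q * h + h ^ 2 / 8 := by
    simp only [hg] at hgnonneg; linarith
  calc 1 - q + q * Real.exp h = D h := rfl
    _ = Real.exp (Real.log (D h)) := (Real.exp_log (hDpos h)).symm
    _ ≤ Real.exp (q * h + h ^ 2 / 8) := Real.exp_le_exp.mpr hlog

lemma mcd_hoeffding {κ : Type*} [Fintype κ] (w : κ → ℝ) (hw0 : ∀ a, 0 ≤ w a)
    (hw1 : ∑ a, w a = 1) (X : κ → ℝ) (A B : ℝ) (hA : ∀ a, A ≤ X a) (hB : ∀ a, X a ≤ B)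
    (hmean : ∑ a, w a * X a = 0) (s : ℝ) :
    ∑ a, w a * Real.exp (s * X a) ≤ Real.exp (s ^ 2 * (B - A) ^ 2 / 8) := by
  have hA0 : A ≤ 0 := by
    have h1 : ∑ a, w a * A ≤ ∑ a, w a * X a :=
      Finset.sum_le_sum fun a _ => mul_le_mul_of_nonneg_left (hA a) (hw0 a)
    rw [hmean, ← Finset.sum_mul, hw1, one_mul] at h1
    exact h1
  have hB0 : 0 ≤ B := by
    have h1 : ∑ a, w a * X a ≤ ∑ a, w a * B :=
      Finset.sum_le_sum fun a _ => mul_le_mul_of_nonneg_left (hB a) (hw0 a)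
    rw [hmean, ← Finset.sum_mul, hw1, one_mul] at h1
    exact h1
  rcases eq_or_lt_of_le (hA0.trans hB0) with hAB | hAB
  · -- A = B = 0, all X a = 0
    have hA' : A = 0 := le_antisymm hA0 (by rw [hAB]; exact hB0)
    have hB' : B = 0 := by rw [← hAB]; exact hA'
    have hX : ∀ a, X a = 0 := fun a => le_antisymm (hB' ▸ hB a) (hA' ▸ hA a)
    simp only [hX, hA', hB', mul_zero, Real.exp_zero, mul_one, sub_zero]
    rw [hw1]
    norm_num
  · have hBA : (0:ℝ) < B - A := by linarith
    set eA := Real.exp (s * A) with heA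
    set eB := Real.exp (s * B) with heB
    have step1 : ∀ a, Real.exp (s * X a)
        ≤ ((B - X a) * eA + (X a - A) * eB) / (B - A) := by
      intro a
      have hθ0 : (0:ℝ) ≤ (B - X a) / (B - A) := by
        apply div_nonneg _ hBA.le; linarith [hB a]
      have hθ'0 : (0:ℝ) ≤ (X a - A) / (B - A) := by
        apply div_nonneg _ hBA.le; linarith [hA a]
      have hsum : (B - X a) / (B - A) + (X a - A) / (B - A) = 1 := by
        field_simp
        ring
      have := convexOn_exp.2 (Set.mem_univ (s * A)) (Set.mem_univ (s * B)) hθ0 hθ'0 hsum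
      simp only [smul_eq_mul] at this
      have harg : (B - X a) / (B - A) * (s * A) + (X a - A) / (B - A) * (s * B)
          = s * X a := by field_simp; ring
      rw [harg] at this
      calc Real.exp (s * X a)
          ≤ (B - X a) / (B - A) * eA + (X a - A) / (B - A) * eB := this
        _ = ((B - X a) * eA + (X a - A) * eB) / (B - A) := by ring
    have step2 : ∑ a, w a * Real.exp (s * X a) ≤ (B * eA - A * eB) / (B - A) := by
      calc ∑ a, w a * Real.exp (s * X a)
          ≤ ∑ a, w a * (((B - X a) * eA + (X a - A) * eB) / (B - A)) :=
            Finset.sum_le_sum fun a _ => mul_le_mul_of_nonneg_left (step1 a) (hw0 a)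
        _ = ((∑ a, w a * (B - X a)) * eA + (∑ a, w a * (X a - A)) * eB) / (B - A) := by
            simp only [show ∀ a : κ, w a * (((B - X a) * eA + (X a - A) * eB) / (B - A))
              = (w a * (B - X a) * eA + w a * (X a - A) * eB) / (B - A) from fun a => by ring]
            rw [← Finset.sum_div, Finset.sum_add_distrib, ← Finset.sum_mul, ← Finset.sum_mul]
        _ = (B * eA - A * eB) / (B - A) := by
            have e1 : ∑ a, w a * (B - X a) = B := by
              simp only [mul_sub]
              rw [Finset.sum_sub_distrib, ← Finset.sum_mul, hw1, hmean]; ring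
            have e2 : ∑ a, w a * (X a - A) = -A := by
              simp only [mul_sub]
              rw [Finset.sum_sub_distrib, ← Finset.sum_mul, hw1, hmean]; ring
            rw [e1, e2]; ring
    set q := -A / (B - A) with hq
    have hq0 : 0 ≤ q := by apply div_nonneg _ hBA.le; linarith
    have hq1 : q ≤ 1 := by rw [div_le_one hBA]; linarith
    set hh := s * (B - A) with hhh
    have key := mcd_key q hq0 hq1 hh
    have heq : (B * eA - A * eB) / (B - A) = eA * (1 - q + q * Real.exp hh) := by
      have : eB = eA * Real.exp hh := by
        rw [heA, heB, hhh, ← Real.exp_add]; ring_nf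
      rw [this, hq]; field_simp; ring
    have hfin : eA * Real.exp (q * hh + hh ^ 2 / 8) = Real.exp (s ^ 2 * (B - A) ^ 2 / 8) := by
      rw [heA, ← Real.exp_add]
      congr 1
      rw [hq, hhh]
      field_simp
      ring
    calc ∑ a, w a * Real.exp (s * X a) ≤ (B * eA - A * eB) / (B - A) := step2
      _ = eA * (1 - q + q * Real.exp hh) := heq
      _ ≤ eA * Real.exp (q * hh + hh ^ 2 / 8) := by
          apply mul_le_mul_of_nonneg_left key (Real.exp_pos _).le
      _ = Real.exp (s ^ 2 * (B - A) ^ 2 / 8) := hfin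

section mcd
variable {κ : Type*} [Fintype κ]

noncomputable def mcdW (w : κ → ℝ) {n : ℕ} (x : Fin n → κ) : ℝ := ∏ k, w (x k)

noncomputable def mcdE (w : κ → ℝ) {n : ℕ} (f : (Fin n → κ) → ℝ) : ℝ :=
  ∑ x : Fin n → κ, mcdW w x * f x

lemma mcd_sum_succ {n : ℕ} (F : (Fin (n + 1) → κ) → ℝ) :
    ∑ x : Fin (n + 1) → κ, F x = ∑ a : κ, ∑ y : Fin n → κ, F (Fin.cons a y) := by
  have h := Fintype.sum_equiv (Fin.consEquiv (fun _ => κ))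
    (fun p : κ × (Fin n → κ) => F (Fin.cons p.1 p.2)) F (fun p => rfl)
  rw [← h, Fintype.sum_prod_type]

lemma mcdW_cons (w : κ → ℝ) {n : ℕ} (a : κ) (y : Fin n → κ) :
    mcdW w (Fin.cons a y) = w a * mcdW w y := by
  simp [mcdW, Fin.prod_univ_succ]

lemma mcdW_nonneg (w : κ → ℝ) (hw0 : ∀ a, 0 ≤ w a) {n : ℕ} (x : Fin n → κ) :
    0 ≤ mcdW w x := Finset.prod_nonneg fun k _ => hw0 (x k)

lemma mcdW_zero (w : κ → ℝ) (x : Fin 0 → κ) : mcdW w x = 1 := by simp [mcdW]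

lemma mcdW_total (w : κ → ℝ) (hw1 : ∑ a, w a = 1) : ∀ {n : ℕ},
    ∑ x : Fin n → κ, mcdW w x = 1 := by
  intro n
  induction n with
  | zero => rw [Fintype.sum_unique]; exact mcdW_zero w _
  | succ n ih =>
    rw [mcd_sum_succ (mcdW w)]
    simp only [mcdW_cons]
    rw [← Finset.sum_mul_sum]
    rw [hw1, ih, one_mul]

lemma mcdE_succ (w : κ → ℝ) {n : ℕ} (f : (Fin (n + 1) → κ) → ℝ) :
    mcdE w f = mcdE w (fun y : Fin n → κ => ∑ a, w a * f (Fin.cons a y)) := by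
  unfold mcdE
  rw [mcd_sum_succ (fun x => mcdW w x * f x)]
  rw [Finset.sum_comm]
  congr 1; funext y
  rw [Finset.mul_sum]
  congr 1; funext a
  rw [mcdW_cons]; ring

lemma mcd_marginal (w : κ → ℝ) (hw1 : ∑ a, w a = 1) : ∀ {n : ℕ} (k : Fin n) (F : κ → ℝ),
    ∑ x : Fin n → κ, mcdW w x * F (x k) = ∑ a, w a * F a := by
  intro n
  induction n with
  | zero => exact fun k => k.elim0
  | succ n ih =>
    intro k F
    rw [mcd_sum_succ (fun x => mcdW w x * F (x k))]
    induction k using Fin.cases with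
    | zero =>
      simp only [mcdW_cons, Fin.cons_zero]
      have : ∀ a : κ, ∑ y : Fin n → κ, w a * mcdW w y * F a
          = w a * F a * ∑ y : Fin n → κ, mcdW w y := by
        intro a; rw [Finset.mul_sum]; congr 1; funext y; ring
      simp only [this, mcdW_total w hw1, mul_one]
    | succ j =>
      simp only [mcdW_cons, Fin.cons_succ]
      have : ∀ a : κ, ∑ y : Fin n → κ, w a * mcdW w y * F (y j)
          = w a * ∑ y : Fin n → κ, mcdW w y * F (y j) := by
        intro a; rw [Finset.mul_sum]; congr 1; funext y; ring
      simp only [this, ih j F]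
      rw [← Finset.sum_mul, hw1, one_mul]

lemma mcd_mgf [Nonempty κ] (w : κ → ℝ) (hw0 : ∀ a, 0 ≤ w a) (hw1 : ∑ a, w a = 1)
    (c s : ℝ) (hc : 0 ≤ c) : ∀ {n : ℕ} (f : (Fin n → κ) → ℝ),
    (∀ (x y : Fin n → κ) (k : Fin n), (∀ j, j ≠ k → x j = y j) → f x - f y ≤ c) →
    mcdE w (fun x => Real.exp (s * (f x - mcdE w f)))
      ≤ Real.exp (s ^ 2 * n * c ^ 2 / 8) := by
  intro n
  induction n with
  | zero =>
    intro f _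
    have h1 : mcdE w f = f default := by
      unfold mcdE; rw [Fintype.sum_unique, mcdW_zero, one_mul]
    rw [h1]
    unfold mcdE
    rw [Fintype.sum_unique, mcdW_zero, one_mul]
    simp
  | succ n ih =>
    intro f hf
    set g : (Fin n → κ) → ℝ := fun y => ∑ a, w a * f (Fin.cons a y) with hgdef
    have hEg : mcdE w f = mcdE w g := mcdE_succ w f
    have hgbd : ∀ (y y' : Fin n → κ) (k : Fin n), (∀ j, j ≠ k → y j = y' j)
        → g y - g y' ≤ c := by
      intro y y' k hyy'
      rw [hgdef]
      simp only
      rw [← Finset.sum_sub_distrib]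
      have : ∀ a : κ, w a * f (Fin.cons a y) - w a * f (Fin.cons a y')
          ≤ w a * c := by
        intro a
        rw [← mul_sub]
        apply mul_le_mul_of_nonneg_left _ (hw0 a)
        apply hf _ _ k.succ
        intro j hj
        induction j using Fin.cases with
        | zero => simp
        | succ i =>
          simp only [Fin.cons_succ]
          exact hyy' i (fun hik => hj (by rw [hik]))
      calc _ ≤ ∑ a, w a * c := Finset.sum_le_sum fun a _ => this a
        _ = c := by rw [← Finset.sum_mul, hw1, one_mul]
    -- inner Hoeffding bound for each y
    have hinner : ∀ y : Fin n → κ,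
        ∑ a, w a * Real.exp (s * (f (Fin.cons a y) - g y))
          ≤ Real.exp (s ^ 2 * c ^ 2 / 8) := by
      intro y
      set X : κ → ℝ := fun a => f (Fin.cons a y) - g y with hX
      obtain ⟨amin, -, hmin⟩ := Finset.exists_min_image Finset.univ X ⟨Classical.arbitrary κ, Finset.mem_univ _⟩
      obtain ⟨amax, -, hmax⟩ := Finset.exists_max_image Finset.univ X ⟨Classical.arbitrary κ, Finset.mem_univ _⟩
      have hmean : ∑ a, w a * X a = 0 := by
        simp only [hX, mul_sub]
        rw [Finset.sum_sub_distrib, ← Finset.sum_mul, hw1, one_mul, hgdef]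
        simp
      have hd : X amax - X amin ≤ c := by
        simp only [hX, sub_sub_sub_cancel_right]
        apply hf _ _ 0
        intro j hj
        induction j using Fin.cases with
        | zero => exact absurd rfl hj
        | succ i => simp
      have hd0 : 0 ≤ X amax - X amin :=
        sub_nonneg.mpr (hmin amax (Finset.mem_univ _))
      calc ∑ a, w a * Real.exp (s * X a)
          ≤ Real.exp (s ^ 2 * (X amax - X amin) ^ 2 / 8) :=
            mcd_hoeffding w hw0 hw1 X (X amin) (X amax)
              (fun a => hmin a (Finset.mem_univ a)) (fun a => hmax a (Finset.mem_univ a))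
              hmean s
        _ ≤ Real.exp (s ^ 2 * c ^ 2 / 8) := by
            apply Real.exp_le_exp.mpr
            gcongr
    -- main estimate
    have key : mcdE w (fun x => Real.exp (s * (f x - mcdE w f)))
        ≤ Real.exp (s ^ 2 * c ^ 2 / 8)
          * mcdE w (fun y => Real.exp (s * (g y - mcdE w g))) := by
      set Ef := mcdE w f with hEfdef
      set Eg := mcdE w g with hEgdef
      unfold mcdE
      rw [mcd_sum_succ (fun x => mcdW w x * Real.exp (s * (f x - Ef)))]
      rw [Finset.sum_comm, Finset.mul_sum]
      apply Finset.sum_le_sum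
      intro y _
      have hsplit : ∀ a : κ, mcdW w (Fin.cons a y) * Real.exp (s * (f (Fin.cons a y) - Ef))
          = mcdW w y * Real.exp (s * (g y - Eg))
            * (w a * Real.exp (s * (f (Fin.cons a y) - g y))) := by
        intro a
        have hexp : Real.exp (s * (f (Fin.cons a y) - Ef))
            = Real.exp (s * (g y - Eg)) * Real.exp (s * (f (Fin.cons a y) - g y)) := by
          rw [← Real.exp_add]
          congr 1
          rw [← hEg]
          ring
        rw [mcdW_cons, hexp]
        ring
      simp only [hsplit]
      rw [← Finset.mul_sum]
      rw [mul_comm (Real.exp (s ^ 2 * c ^ 2 / 8))]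
      apply mul_le_mul_of_nonneg_left (hinner y)
      exact mul_nonneg (mcdW_nonneg w hw0 y) (Real.exp_pos _).le
    calc mcdE w (fun x => Real.exp (s * (f x - mcdE w f)))
        ≤ Real.exp (s ^ 2 * c ^ 2 / 8)
          * mcdE w (fun y => Real.exp (s * (g y - mcdE w g))) := key
      _ ≤ Real.exp (s ^ 2 * c ^ 2 / 8) * Real.exp (s ^ 2 * n * c ^ 2 / 8) := by
          apply mul_le_mul_of_nonneg_left (ih g hgbd) (Real.exp_pos _).le
      _ = Real.exp (s ^ 2 * (n + 1 : ℕ) * c ^ 2 / 8) := by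
          rw [← Real.exp_add]; congr 1; push_cast; ring

end mcd

lemma mcd_tail {κ : Type*} [Fintype κ] [Nonempty κ] (w : κ → ℝ) (hw0 : ∀ a, 0 ≤ w a)
    (hw1 : ∑ a, w a = 1) {n : ℕ} (hn : 0 < n) (f : (Fin n → κ) → ℝ) (c : ℝ) (hc : 0 < c)
    (hf : ∀ (x y : Fin n → κ) (k : Fin n), (∀ j, j ≠ k → x j = y j) → f x - f y ≤ c)
    (t : ℝ) (ht : 0 < t) :
    ∑ x ∈ Finset.univ.filter (fun x : Fin n → κ => mcdE w f + t ≤ f x), mcdW w x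
      ≤ Real.exp (-(2 * t ^ 2) / (n * c ^ 2)) := by
  set s : ℝ := 4 * t / (n * c ^ 2) with hs
  have hnc : (0:ℝ) < n * c ^ 2 := by positivity
  have hs0 : 0 < s := by positivity
  have key := mcd_mgf w hw0 hw1 c s hc.le f hf
  have step : ∑ x ∈ Finset.univ.filter (fun x : Fin n → κ => mcdE w f + t ≤ f x), mcdW w x
      ≤ Real.exp (-(s * t)) * Real.exp (s ^ 2 * n * c ^ 2 / 8) := by
    have h1 : ∀ x ∈ Finset.univ.filter (fun x : Fin n → κ => mcdE w f + t ≤ f x),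
        mcdW w x ≤ Real.exp (-(s * t)) * (mcdW w x * Real.exp (s * (f x - mcdE w f))) := by
      intro x hx
      rw [Finset.mem_filter] at hx
      have h2 : s * t ≤ s * (f x - mcdE w f) := by
        apply mul_le_mul_of_nonneg_left _ hs0.le
        linarith [hx.2]
      have h3 : (1:ℝ) ≤ Real.exp (-(s * t)) * Real.exp (s * (f x - mcdE w f)) := by
        rw [← Real.exp_add]
        rw [show (-(s*t) + s * (f x - mcdE w f)) = s * (f x - mcdE w f) - s*t by ring]
        rw [← Real.exp_zero]
        apply Real.exp_le_exp.mpr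
        linarith
      calc mcdW w x = mcdW w x * 1 := (mul_one _).symm
        _ ≤ mcdW w x * (Real.exp (-(s * t)) * Real.exp (s * (f x - mcdE w f))) :=
            mul_le_mul_of_nonneg_left h3 (mcdW_nonneg w hw0 x)
        _ = Real.exp (-(s * t)) * (mcdW w x * Real.exp (s * (f x - mcdE w f))) := by ring
    calc ∑ x ∈ Finset.univ.filter (fun x : Fin n → κ => mcdE w f + t ≤ f x), mcdW w x
        ≤ ∑ x ∈ Finset.univ.filter (fun x : Fin n → κ => mcdE w f + t ≤ f x),
            Real.exp (-(s * t)) * (mcdW w x * Real.exp (s * (f x - mcdE w f))) :=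
          Finset.sum_le_sum h1
      _ ≤ ∑ x : Fin n → κ,
            Real.exp (-(s * t)) * (mcdW w x * Real.exp (s * (f x - mcdE w f))) := by
          apply Finset.sum_le_sum_of_subset_of_nonneg (Finset.filter_subset _ _)
          intro x _ _
          exact mul_nonneg (Real.exp_pos _).le
            (mul_nonneg (mcdW_nonneg w hw0 x) (Real.exp_pos _).le)
      _ = Real.exp (-(s * t)) * mcdE w (fun x => Real.exp (s * (f x - mcdE w f))) := by
          rw [← Finset.mul_sum]; rfl
      _ ≤ Real.exp (-(s * t)) * Real.exp (s ^ 2 * n * c ^ 2 / 8) :=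
          mul_le_mul_of_nonneg_left key (Real.exp_pos _).le
  calc _ ≤ Real.exp (-(s * t)) * Real.exp (s ^ 2 * n * c ^ 2 / 8) := step
    _ = Real.exp (-(2 * t ^ 2) / (n * c ^ 2)) := by
        rw [← Real.exp_add]
        congr 1
        rw [hs]
        field_simp
        ring

noncomputable def ent2 (t : ℝ) : ℝ := -(t * Real.logb 2 t)

lemma ent2_eq (t : ℝ) : ent2 t = Real.negMulLog t / Real.log 2 := by
  unfold ent2 Real.logb
  rw [Real.negMulLog_def]
  ring

lemma entL_step (n j : ℕ) (hn : 2 ≤ n) (hj : j + 1 ≤ n) :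
    |Real.negMulLog (((j:ℝ) + 1) / n) - Real.negMulLog ((j:ℝ) / n)| ≤ Real.log n / n := by
  have hn0 : (0:ℝ) < n := by exact_mod_cast (show 0 < n by omega)
  have hlogn0 : 0 < Real.log n := Real.log_pos (by exact_mod_cast (show 1 < n by omega))
  rcases Nat.eq_zero_or_pos j with hj0 | hj1
  · subst hj0
    simp only [Nat.cast_zero]
    have h1 : Real.negMulLog ((0:ℝ) / n) = 0 := by simp [Real.negMulLog]
    have h2 : Real.negMulLog (((0:ℝ) + 1) / n) = Real.log n / n := by
      simp only [Real.negMulLog_def, zero_add]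
      rw [Real.log_div one_ne_zero hn0.ne', Real.log_one]
      field_simp
      ring
    rw [h1, h2, sub_zero, abs_of_pos (by positivity)]
  · have hj0' : (0:ℝ) < j := by exact_mod_cast hj1
    have hj10 : (0:ℝ) < (j:ℝ) + 1 := by linarith
    have e1 : Real.negMulLog ((j:ℝ) / n) = -((j:ℝ) / n) * (Real.log j - Real.log n) := by
      simp only [Real.negMulLog_def]
      rw [Real.log_div hj0'.ne' hn0.ne']
    have e2 : Real.negMulLog (((j:ℝ) + 1) / n)
        = -(((j:ℝ) + 1) / n) * (Real.log ((j:ℝ) + 1) - Real.log n) := by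
      simp only [Real.negMulLog_def]
      rw [Real.log_div hj10.ne' hn0.ne']
    set D : ℝ := ((j:ℝ) + 1) * Real.log ((j:ℝ) + 1) - (j:ℝ) * Real.log j with hDdef
    have hED : Real.negMulLog (((j:ℝ) + 1) / n) - Real.negMulLog ((j:ℝ) / n)
        = (Real.log n - D) / n := by
      rw [e1, e2, hDdef]
      field_simp
      ring
    have hjn : Real.log ((j:ℝ) + 1) ≤ Real.log n := by
      apply Real.log_le_log hj10
      exact_mod_cast hj
    have hD0 : 0 ≤ D := by
      rw [hDdef]
      have h1 : 0 ≤ Real.log j := Real.log_natCast_nonneg j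
      have h2 : Real.log (j:ℝ) ≤ Real.log ((j:ℝ) + 1) := by
        apply Real.log_le_log hj0'
        linarith
      nlinarith
    have hD2 : D ≤ 2 * Real.log n := by
      have hratio : Real.log ((j:ℝ) + 1) - Real.log j ≤ 1 / j := by
        rw [← Real.log_div hj10.ne' hj0'.ne']
        have := Real.log_le_sub_one_of_pos (show (0:ℝ) < ((j:ℝ)+1)/j by positivity)
        calc Real.log (((j:ℝ) + 1) / j) ≤ ((j:ℝ) + 1) / j - 1 := this
          _ = 1 / j := by field_simp; ring
      have hDalt : D = Real.log ((j:ℝ) + 1) + (j:ℝ) * (Real.log ((j:ℝ) + 1) - Real.log j) := by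
        rw [hDdef]; ring
      rcases eq_or_lt_of_le (show 1 ≤ j from hj1) with hj1' | hj2
      · -- j = 1
        have hj1'' : j = 1 := hj1'.symm
        subst hj1''
        rw [hDdef]
        norm_num
        have : Real.log 2 ≤ Real.log n := by
          apply Real.log_le_log (by norm_num)
          exact_mod_cast hn
        linarith
      · -- j ≥ 2, so n ≥ 3
        have hn3 : 3 ≤ n := by omega
        have hlogn1 : 1 < Real.log n := by
          rw [Real.lt_log_iff_exp_lt hn0]
          calc Real.exp 1 < 2.7182818286 := Real.exp_one_lt_d9
            _ ≤ (3:ℝ) := by norm_num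
            _ ≤ n := by exact_mod_cast hn3
        have h3 : (j:ℝ) * (Real.log ((j:ℝ) + 1) - Real.log j) ≤ 1 := by
          have := mul_le_mul_of_nonneg_left hratio hj0'.le
          calc (j:ℝ) * (Real.log ((j:ℝ) + 1) - Real.log j) ≤ (j:ℝ) * (1 / j) := this
            _ = 1 := by field_simp
        rw [hDalt]
        linarith
    rw [hED, abs_div, abs_of_pos hn0]
    gcongr
    exact abs_le.mpr ⟨by linarith, by linarith⟩

lemma ent2_step (n j : ℕ) (hn : 2 ≤ n) (hj : j + 1 ≤ n) :
    |ent2 (((j:ℝ) + 1) / n) - ent2 ((j:ℝ) / n)| ≤ Real.logb 2 n / n := by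
  have hlog2 : 0 < Real.log 2 := Real.log_pos (by norm_num)
  rw [ent2_eq, ent2_eq, div_sub_div_same, abs_div, abs_of_pos hlog2]
  calc |Real.negMulLog (((j:ℝ) + 1) / n) - Real.negMulLog ((j:ℝ) / n)| / Real.log 2
      ≤ (Real.log n / n) / Real.log 2 := by gcongr; exact entL_step n j hn hj
    _ = Real.logb 2 n / n := by rw [Real.logb]; ring

noncomputable def fent (m n : ℕ) (x : Fin n → Fin m) : ℝ :=
  ∑ i : Fin m, ent2 (((Finset.univ.filter fun k => x k = i).card : ℝ) / n)

lemma cnt_le (m n : ℕ) (x : Fin n → Fin m) (i : Fin m) :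
    (Finset.univ.filter fun k => x k = i).card ≤ n := by
  calc (Finset.univ.filter fun k => x k = i).card ≤ Finset.univ.card :=
        Finset.card_filter_le _ _
    _ = n := by simp

lemma fent_bd (m n : ℕ) (hn : 2 ≤ n) (x y : Fin n → Fin m) (k₀ : Fin n)
    (hxy : ∀ j, j ≠ k₀ → x j = y j) :
    fent m n x - fent m n y ≤ 2 * Real.logb 2 n / n := by
  have hlogbn : 0 ≤ Real.logb 2 n :=
    Real.logb_nonneg (by norm_num) (by exact_mod_cast (show 1 ≤ n by omega))
  have hn0 : (0:ℝ) < n := by exact_mod_cast (show 0 < n by omega)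
  set cnt : Fin m → (Fin n → Fin m) → ℕ :=
    fun i z => (Finset.univ.filter fun k => z k = i).card with hcnt
  by_cases hab : x k₀ = y k₀
  · have hxyall : x = y := by
      funext j
      by_cases hj : j = k₀
      · rw [hj]; exact hab
      · exact hxy j hj
    rw [hxyall, sub_self]
    positivity
  · set a := x k₀ with ha
    set b := y k₀ with hb
    have hfa : Finset.univ.filter (fun kk => x kk = a)
        = insert k₀ (Finset.univ.filter fun kk => y kk = a) := by
      ext kk
      simp only [Finset.mem_filter, Finset.mem_univ, true_and, Finset.mem_insert]
      constructor
      · intro h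
        by_cases hkk : kk = k₀
        · exact Or.inl hkk
        · exact Or.inr (by rw [← hxy kk hkk]; exact h)
      · intro h
        by_cases hkk : kk = k₀
        · rw [hkk]
        · rw [hxy kk hkk]; exact h.resolve_left hkk
    have hfb : Finset.univ.filter (fun kk => y kk = b)
        = insert k₀ (Finset.univ.filter fun kk => x kk = b) := by
      ext kk
      simp only [Finset.mem_filter, Finset.mem_univ, true_and, Finset.mem_insert]
      constructor
      · intro h
        by_cases hkk : kk = k₀
        · exact Or.inl hkk
        · exact Or.inr (by rw [hxy kk hkk]; exact h)
      · intro h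
        by_cases hkk : kk = k₀
        · rw [hkk]
        · rw [← hxy kk hkk]; exact h.resolve_left hkk
    have hka : k₀ ∉ Finset.univ.filter fun kk => y kk = a := by
      simp only [Finset.mem_filter, Finset.mem_univ, true_and]
      exact fun h => hab h.symm
    have hkb : k₀ ∉ Finset.univ.filter fun kk => x kk = b := by
      simp only [Finset.mem_filter, Finset.mem_univ, true_and]
      exact fun h => hab h
    have hca : cnt a x = cnt a y + 1 := by
      rw [hcnt]; simp only; rw [hfa, Finset.card_insert_of_notMem hka]
    have hcb : cnt b y = cnt b x + 1 := by
      rw [hcnt]; simp only; rw [hfb, Finset.card_insert_of_notMem hkb]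
    have hother : ∀ i, i ≠ a → i ≠ b → cnt i x = cnt i y := by
      intro i hia hib
      rw [hcnt]
      simp only
      congr 1
      ext kk
      simp only [Finset.mem_filter, Finset.mem_univ, true_and]
      by_cases hkk : kk = k₀
      · subst hkk
        constructor
        · intro h; exact absurd h.symm hia
        · intro h; exact absurd h.symm hib
      · rw [hxy kk hkk]
    set d : Fin m → ℝ := fun i => ent2 ((cnt i x : ℝ) / n) - ent2 ((cnt i y : ℝ) / n) with hd
    have hsum : fent m n x - fent m n y = ∑ i : Fin m, d i := by
      rw [fent, fent, ← Finset.sum_sub_distrib]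
    have hzero : ∀ i ∈ Finset.univ, i ∉ ({a, b} : Finset (Fin m)) → d i = 0 := by
      intro i _ hi
      simp only [Finset.mem_insert, Finset.mem_singleton, not_or] at hi
      rw [hd]; simp only
      rw [hother i hi.1 hi.2, sub_self]
    have hpair : ∑ i : Fin m, d i = d a + d b := by
      rw [← Finset.sum_subset (Finset.subset_univ ({a, b} : Finset (Fin m))) hzero]
      exact Finset.sum_pair hab
    have hda : |d a| ≤ Real.logb 2 n / n := by
      have h1 : (cnt a y) + 1 ≤ n := by rw [← hca]; exact cnt_le m n x a
      have h2 : ((cnt a x : ℕ) : ℝ) = ((cnt a y : ℕ) : ℝ) + 1 := by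
        rw [hca]; push_cast; ring
      rw [hd]; simp only
      rw [h2]
      exact ent2_step n (cnt a y) hn h1
    have hdb : |d b| ≤ Real.logb 2 n / n := by
      have h1 : (cnt b x) + 1 ≤ n := by rw [← hcb]; exact cnt_le m n y b
      have h2 : ((cnt b y : ℕ) : ℝ) = ((cnt b x : ℕ) : ℝ) + 1 := by
        rw [hcb]; push_cast; ring
      rw [hd]; simp only
      rw [h2, ← neg_sub, abs_neg]
      exact ent2_step n (cnt b x) hn h1
    rw [hsum, hpair]
    have := abs_le.mp hda
    have := abs_le.mp hdb
    calc d a + d b ≤ Real.logb 2 n / n + Real.logb 2 n / n := by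
          linarith [(abs_le.mp hda).2, (abs_le.mp hdb).2]
      _ = 2 * Real.logb 2 n / n := by ring

lemma ent2_concave : ConcaveOn ℝ (Set.Ici (0:ℝ)) ent2 := by
  have hlog2 : 0 < Real.log 2 := Real.log_pos (by norm_num)
  have h := Real.concaveOn_negMulLog.smul (le_of_lt (inv_pos.mpr hlog2))
  have he : ent2 = fun t => (Real.log 2)⁻¹ • Real.negMulLog t := by
    funext t
    simp only [Pi.smul_apply, smul_eq_mul]
    rw [ent2_eq]
    ring
  rw [he]; exact h

lemma fent_expect (m n : ℕ) (hn : 1 ≤ n) (p : Fin m → ℝ) (hp0 : ∀ i, 0 ≤ p i)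
    (hp1 : ∑ i, p i = 1) :
    mcdE p (fent m n) ≤ ∑ i : Fin m, ent2 (p i) := by
  have hn0 : (0:ℝ) < n := by exact_mod_cast (show 0 < n by omega)
  have hW0 : ∀ x : Fin n → Fin m, 0 ≤ mcdW p x := mcdW_nonneg p hp0
  have hW1 : ∑ x : Fin n → Fin m, mcdW p x = 1 := mcdW_total p hp1
  set z : Fin m → (Fin n → Fin m) → ℝ :=
    fun i x => ((Finset.univ.filter fun k => x k = i).card : ℝ) / n with hz
  have hswap : mcdE p (fent m n)
      = ∑ i : Fin m, ∑ x : Fin n → Fin m, mcdW p x * ent2 (z i x) := by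
    unfold mcdE fent
    rw [Finset.sum_comm]
    congr 1; funext x
    rw [Finset.mul_sum]
  have hmarg : ∀ i : Fin m, ∑ x : Fin n → Fin m, mcdW p x * z i x = p i := by
    intro i
    have hcast : ∀ x : Fin n → Fin m, ((Finset.univ.filter fun k => x k = i).card : ℝ)
        = ∑ k : Fin n, (if x k = i then (1:ℝ) else 0) :=
      fun x => Finset.natCast_card_filter _ _
    have h1 : ∀ x : Fin n → Fin m, mcdW p x * z i x
        = (∑ k : Fin n, mcdW p x * (if x k = i then (1:ℝ) else 0)) / n := by
      intro x
      rw [hz]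
      simp only
      rw [← Finset.mul_sum, ← hcast]
      ring
    simp only [h1]
    rw [← Finset.sum_div, Finset.sum_comm]
    have h2 : ∀ k : Fin n, ∑ x : Fin n → Fin m, mcdW p x * (if x k = i then (1:ℝ) else 0)
        = p i := by
      intro k
      rw [mcd_marginal p hp1 k (fun a => if a = i then (1:ℝ) else 0)]
      simp [mul_ite]
    simp only [h2, Finset.sum_const, Finset.card_univ, Fintype.card_fin, nsmul_eq_mul]
    field_simp
  have hjensen : ∀ i : Fin m, ∑ x : Fin n → Fin m, mcdW p x * ent2 (z i x) ≤ ent2 (p i) := by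
    intro i
    have h := ent2_concave.le_map_sum (t := Finset.univ) (w := mcdW p) (p := z i)
      (fun x _ => hW0 x) hW1 (fun x _ => by
        rw [hz]; simp only; exact Set.mem_Ici.mpr (by positivity))
    simp only [smul_eq_mul] at h
    calc ∑ x : Fin n → Fin m, mcdW p x * ent2 (z i x) ≤ ent2 (∑ x, mcdW p x * z i x) := h
      _ = ent2 (p i) := by rw [hmarg i]
  rw [hswap]
  exact Finset.sum_le_sum fun i _ => hjensen i

end McdAux

/-- **Observable lower bound on the Shannon entropy from the empirical entropy.**
For `n ≥ 2` i.i.d. samples from a distribution `p` on a finite alphabet of size `m`, with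
empirical entropy `Ĥ_MLE` and Shannon entropy `H(p) = -∑ᵢ pᵢ log₂ pᵢ`, for every
`ε ∈ (0, 1]`, `Pr[H(p) ≤ Ĥ_MLE - √(2 (log₂ n)² ln(2/ε) / n)] ≤ ε`. -/
theorem entropy_lower_bound_from_empirical
    {Ω : Type*} [MeasurableSpace Ω] (μ : Measure Ω) [IsProbabilityMeasure μ]
    (m n : ℕ) (hm : 1 ≤ m) (hn : 2 ≤ n)
    (U : Fin n → Ω → Fin m)
    (hmeas : ∀ k, Measurable (U k))
    (hindep : iIndepFun U μ)
    (p : Fin m → ℝ) (hp : ∀ k i, (μ {ω | U k ω = i}).toReal = p i)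
    (phat : Fin m → Ω → ℝ)
    (hphat : ∀ i ω, phat i ω = ((Finset.univ.filter fun k => U k ω = i).card : ℝ) / n)
    (Hmle : Ω → ℝ)
    (hHmle : ∀ ω, Hmle ω = -∑ i : Fin m, phat i ω * Real.logb 2 (phat i ω))
    (ε : ℝ) (hε₀ : 0 < ε) (hε₁ : ε ≤ 1) :
    μ {ω | -∑ i : Fin m, p i * Real.logb 2 (p i)
          ≤ Hmle ω - Real.sqrt (2 * (Real.logb 2 n) ^ 2 * Real.log (2 / ε) / n)}
      ≤ ENNReal.ofReal ε := by
  have hn0 : 0 < n := by omega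
  have hNE : Nonempty (Fin m) := ⟨⟨0, by omega⟩⟩
  set k0 : Fin n := ⟨0, by omega⟩ with hk0
  have hUmeas : ∀ (k : Fin n) (i : Fin m), MeasurableSet {ω | U k ω = i} :=
    fun k i => (hmeas k) (measurableSet_singleton i)
  have hfin : ∀ (k : Fin n) (i : Fin m), μ {ω | U k ω = i} ≠ ⊤ :=
    fun k i => (measure_lt_top μ _).ne
  have hofReal : ∀ (k : Fin n) (i : Fin m), μ {ω | U k ω = i} = ENNReal.ofReal (p i) := by
    intro k i
    rw [← hp k i, ENNReal.ofReal_toReal (hfin k i)]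
  have hp0 : ∀ i, 0 ≤ p i := by
    intro i
    rw [← hp k0 i]
    exact ENNReal.toReal_nonneg
  have hp1 : ∑ i, p i = 1 := by
    have hdisj : (↑(Finset.univ : Finset (Fin m)) : Set (Fin m)).PairwiseDisjoint
        (fun i => {ω | U k0 ω = i}) := by
      intro i _ j _ hij
      apply Set.disjoint_left.mpr
      intro ω h1 h2
      simp only [Set.mem_setOf_eq] at h1 h2
      exact hij (h1.symm.trans h2)
    have hcover : (⋃ i ∈ (Finset.univ : Finset (Fin m)), {ω | U k0 ω = i}) = Set.univ := by
      ext ω; simp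
    have h1 := measure_biUnion_finset (μ := μ) hdisj (fun i _ => hUmeas k0 i)
    rw [hcover, measure_univ] at h1
    have h2 : ((1:ENNReal)).toReal = (∑ i : Fin m, μ {ω | U k0 ω = i}).toReal := by rw [h1]
    rw [ENNReal.toReal_sum (fun i _ => hfin k0 i), ENNReal.toReal_one] at h2
    simp only [hp k0] at h2
    exact h2.symm
  set L := Real.logb 2 (n : ℝ) with hL
  set t := Real.sqrt (2 * L ^ 2 * Real.log (2 / ε) / n) with ht
  set c := 2 * L / n with hc
  have hnR : (0:ℝ) < n := by exact_mod_cast hn0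
  have hL0 : 0 < L := Real.logb_pos (by norm_num) (by exact_mod_cast hn)
  have hc0 : 0 < c := div_pos (by linarith) hnR
  have hlog2ε : 0 < Real.log (2 / ε) := Real.log_pos (by rw [lt_div_iff₀ hε₀]; linarith)
  have ht0 : 0 < t := Real.sqrt_pos.mpr (by positivity)
  have ht2 : t ^ 2 = 2 * L ^ 2 * Real.log (2 / ε) / n := Real.sq_sqrt (by positivity)
  set V : Ω → (Fin n → Fin m) := fun ω k => U k ω with hV
  have hHf : ∀ ω, Hmle ω = fent m n (V ω) := by
    intro ω
    rw [hHmle ω, fent, ← Finset.sum_neg_distrib]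
    apply Finset.sum_congr rfl
    intro i _
    rw [hphat i ω]
    rfl
  set A : Finset (Fin n → Fin m) := Finset.univ.filter
    (fun x => -∑ i : Fin m, p i * Real.logb 2 (p i) ≤ fent m n x - t) with hA
  have hEvent : {ω | -∑ i : Fin m, p i * Real.logb 2 (p i) ≤ Hmle ω - t}
      = ⋃ x ∈ A, {ω | V ω = x} := by
    ext ω
    simp only [Set.mem_setOf_eq, Set.mem_iUnion, hA, Finset.mem_filter, Finset.mem_univ,
      true_and, exists_prop]
    constructor
    · intro h
      exact ⟨V ω, by rw [← hHf ω]; exact h, rfl⟩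
    · rintro ⟨x, hx, hVx⟩
      rw [hHf ω, hVx]
      exact hx
  have hmeasV : ∀ x : Fin n → Fin m, MeasurableSet {ω | V ω = x} := by
    intro x
    have h1 : {ω | V ω = x} = ⋂ k, {ω | U k ω = x k} := by
      ext ω; simp [funext_iff, hV]
    rw [h1]
    exact MeasurableSet.iInter (fun k => hUmeas k (x k))
  have hdisjV : (↑A : Set (Fin n → Fin m)).PairwiseDisjoint (fun x => {ω | V ω = x}) := by
    intro x _ y _ hxy
    apply Set.disjoint_left.mpr
    intro ω h1 h2
    simp only [Set.mem_setOf_eq] at h1 h2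
    exact hxy (h1.symm.trans h2)
  have hprod : ∀ x : Fin n → Fin m, μ {ω | V ω = x} = ENNReal.ofReal (mcdW p x) := by
    intro x
    have h1 : {ω | V ω = x} = ⋂ k ∈ (Finset.univ : Finset (Fin n)), (U k) ⁻¹' {x k} := by
      ext ω; simp [funext_iff, hV]
    rw [h1, hindep.measure_inter_preimage_eq_mul Finset.univ
      (fun k _ => measurableSet_singleton (x k))]
    have h2 : ∀ k : Fin n, μ (U k ⁻¹' {x k}) = ENNReal.ofReal (p (x k)) := by
      intro k
      rw [← hofReal k (x k)]
      rfl
    rw [Finset.prod_congr rfl (fun k _ => h2 k), ← ENNReal.ofReal_prod_of_nonneg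
      (fun k _ => hp0 (x k))]
    rfl
  rw [hEvent, measure_biUnion_finset hdisjV (fun x _ => hmeasV x),
    Finset.sum_congr rfl (fun x _ => hprod x),
    ← ENNReal.ofReal_sum_of_nonneg (fun x _ => mcdW_nonneg p hp0 x)]
  apply ENNReal.ofReal_le_ofReal
  -- real side
  have hHp : mcdE p (fent m n) ≤ -∑ i : Fin m, p i * Real.logb 2 (p i) := by
    have h1 := fent_expect m n (by omega) p hp0 hp1
    have h2 : ∑ i : Fin m, ent2 (p i) = -∑ i : Fin m, p i * Real.logb 2 (p i) := by
      rw [← Finset.sum_neg_distrib]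
      rfl
    linarith
  have hsubset : A ⊆ Finset.univ.filter
      (fun x : Fin n → Fin m => mcdE p (fent m n) + t ≤ fent m n x) := by
    intro x hx
    rw [hA, Finset.mem_filter] at hx
    rw [Finset.mem_filter]
    exact ⟨Finset.mem_univ x, by linarith [hx.2]⟩
  have htail := mcd_tail p hp0 hp1 hn0 (fent m n) c hc0
    (fun x y k h => fent_bd m n hn x y k h) t ht0
  calc ∑ x ∈ A, mcdW p x
      ≤ ∑ x ∈ Finset.univ.filter
          (fun x : Fin n → Fin m => mcdE p (fent m n) + t ≤ fent m n x), mcdW p x :=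
        Finset.sum_le_sum_of_subset_of_nonneg hsubset (fun x _ _ => mcdW_nonneg p hp0 x)
    _ ≤ Real.exp (-(2 * t ^ 2) / (n * c ^ 2)) := htail
    _ = ε / 2 := by
        rw [ht2, hc]
        have harg : -(2 * (2 * L ^ 2 * Real.log (2 / ε) / n)) / ((n:ℝ) * (2 * L / n) ^ 2)
            = -Real.log (2 / ε) := by
          field_simp
        rw [harg, Real.exp_neg, Real.exp_log (by positivity), inv_div]
    _ ≤ ε := by linarith
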